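/- Let P ⊆ ℝⁿ be a discrete point set and p ∈ P a boundary point of conv(P). If the direction cone C(p) = cone(P − p) is finitely generated, then the Voronoi cell V(p) is a polyhedron. -/

import Mathlib

open scoped RealInnerProductSpace
open Set

noncomputable section

abbrev E (n : ℕ) := EuclideanSpace ℝ (Fin n)

/-- `P` is discrete: every bounded set contains only finitely many points of `P`. -/
def IsDiscretePointSet {n : ℕ} (P : Set (E n)) : Prop :=
  ∀ B : Set (E n), Bornology.IsBounded B → (P ∩ B).Finite

/-- The Voronoi cell of `p` relative to `P`. -/
def voronoiCell {n : ℕ} (P : Set (E n)) (p : E n) : Set (E n) :=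
  {x | ∀ q ∈ P, dist x p ≤ dist x q}

/-- A polyhedron: a finite intersection of closed half-spaces. -/
def IsPolyhedron {n : ℕ} (S : Set (E n)) : Prop :=
  ∃ (k : ℕ) (y : Fin k → E n) (α : Fin k → ℝ),
    S = ⋂ i, {x : E n | (inner ℝ x (y i) : ℝ) ≤ α i}

/-- A polytope: a bounded polyhedron. -/
def IsPolytope {n : ℕ} (S : Set (E n)) : Prop :=
  IsPolyhedron S ∧ Bornology.IsBounded S

/-- The half-space of points at least as close to `p` as to `q`. -/
def halfSpace {n : ℕ} (p q : E n) : Set (E n) :=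
  {x : E n | (inner ℝ (x - p) (q - p) : ℝ) ≤ (1/2) * ‖q - p‖^2}

/-- The conic hull: all nonnegative combinations of finitely many elements of `M`. -/
def coneHull {n : ℕ} (M : Set (E n)) : Set (E n) :=
  {x | ∃ (k : ℕ) (v : Fin k → E n) (c : Fin k → ℝ),
    (∀ i, v i ∈ M) ∧ (∀ i, 0 ≤ c i) ∧ x = ∑ i, c i • v i}

/-- The direction cone of `p`: the conic hull of `P - p`. -/
def dirCone {n : ℕ} (P : Set (E n)) (p : E n) : Set (E n) :=
  coneHull ((fun q => q - p) '' P)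

/-- A cone is finitely generated if it is the conic hull of finitely many vectors. -/
def FinitelyGeneratedCone {n : ℕ} (C : Set (E n)) : Prop :=
  ∃ (k : ℕ) (v : Fin k → E n), C = coneHull (Set.range v)

/-- `q` is Voronoi relevant for `p`: dropping `halfSpace p q` strictly enlarges the
intersection defining the Voronoi cell. -/
def VoronoiRelevant {n : ℕ} (P : Set (E n)) (p q : E n) : Prop :=
  (⋂ r ∈ P \ {p}, halfSpace p r) ⊂ ⋂ r ∈ P \ {p, q}, halfSpace p r

/-! ### Auxiliary lemmas -/

lemma mem_coneHull_range_iff {n k : ℕ} (v : Fin k → E n) (u : E n) :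
    u ∈ coneHull (Set.range v) ↔ ∃ a : Fin k → ℝ, (∀ i, 0 ≤ a i) ∧ u = ∑ i, a i • v i := by
  classical
  constructor
  · rintro ⟨k', w, c, hw, hc, rfl⟩
    choose g hg using hw
    refine ⟨fun i => ∑ j ∈ Finset.univ.filter (fun j => g j = i), c j,
      fun i => Finset.sum_nonneg (fun j _ => hc j), ?_⟩
    have key : ∀ i : Fin k, (∑ j ∈ Finset.univ.filter (fun j => g j = i), c j) • v i
        = ∑ j ∈ Finset.univ.filter (fun j => g j = i), c j • w j := by
      intro i
      rw [Finset.sum_smul]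
      refine Finset.sum_congr rfl (fun j hj => ?_)
      rw [← hg j, (Finset.mem_filter.1 hj).2]
    rw [Finset.sum_congr rfl (fun i _ => key i), Finset.sum_fiberwise]
  · rintro ⟨a, ha, rfl⟩
    exact ⟨k, v, a, fun i => ⟨i, rfl⟩, ha, rfl⟩

lemma abs_sum_le_of_li {n : ℕ} {ι : Type*} [Fintype ι] (w : ι → E n)
    (hli : LinearIndependent ℝ w) :
    ∃ C : ℝ, 0 ≤ C ∧ ∀ a : ι → ℝ, ∑ i, |a i| ≤ C * ‖∑ i, a i • w i‖ := by
  classical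
  set φ : (ι → ℝ) →ₗ[ℝ] E n := Fintype.linearCombination ℝ w with hφ
  have hφa : ∀ a : ι → ℝ, φ a = ∑ i, a i • w i := fun a => rfl
  have hinj : Function.Injective φ := by
    rw [← LinearMap.ker_eq_bot, LinearMap.ker_eq_bot']
    intro a ha
    have := Fintype.linearIndependent_iff.1 hli a (by rw [← hφa]; exact ha)
    funext i; exact this i
  set e := LinearEquiv.ofInjective φ hinj
  set f : ↥(LinearMap.range φ) →L[ℝ] (ι → ℝ) :=
    LinearMap.toContinuousLinearMap (e.symm : ↥(LinearMap.range φ) →ₗ[ℝ] (ι → ℝ))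
  refine ⟨(Fintype.card ι) * ‖f‖, by positivity, fun a => ?_⟩
  set u : E n := ∑ i, a i • w i
  have hmem : u ∈ LinearMap.range φ := ⟨a, (hφa a)⟩
  have hfa : f ⟨u, hmem⟩ = a := by
    have : (⟨u, hmem⟩ : ↥(LinearMap.range φ)) = e a := by
      apply Subtype.ext
      simp [e, LinearEquiv.ofInjective_apply, hφa, u]
    rw [this]
    show e.symm (e a) = a
    exact e.symm_apply_apply a
  have hnorm : ‖(⟨u, hmem⟩ : ↥(LinearMap.range φ))‖ = ‖u‖ := rfl
  have hb : ∀ i, |a i| ≤ ‖f‖ * ‖u‖ := by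
    intro i
    calc |a i| = ‖a i‖ := rfl
    _ ≤ ‖a‖ := by simpa [hfa] using norm_le_pi_norm (f ⟨u, hmem⟩) i
    _ ≤ ‖f‖ * ‖u‖ := by simpa [hfa, hnorm] using f.le_opNorm ⟨u, hmem⟩
  calc ∑ i, |a i| ≤ ∑ _i : ι, ‖f‖ * ‖u‖ := Finset.sum_le_sum (fun i _ => hb i)
  _ = Fintype.card ι * (‖f‖ * ‖u‖) := by simp [Finset.sum_const, nsmul_eq_mul]
  _ = Fintype.card ι * ‖f‖ * ‖u‖ := by ring

lemma cone_caratheodory {n k : ℕ} (v : Fin k → E n) :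
    ∀ (N : ℕ) (a : Fin k → ℝ), (Finset.univ.filter (fun i => a i ≠ 0)).card ≤ N →
      (∀ i, 0 ≤ a i) →
      ∃ (s : Finset (Fin k)) (b : Fin k → ℝ), (∀ i, 0 ≤ b i) ∧ (∀ i, b i ≠ 0 → i ∈ s) ∧
        (∑ i, b i • v i = ∑ i, a i • v i) ∧ LinearIndependent ℝ (fun i : s => v i) := by
  classical
  intro N
  induction N with
  | zero =>
    intro a hcard _
    refine ⟨∅, a, ?_⟩
    have hz : ∀ i, a i = 0 := by
      intro i
      by_contra h
      have : i ∈ Finset.univ.filter (fun i => a i ≠ 0) := Finset.mem_filter.2 ⟨Finset.mem_univ _, h⟩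
      have := Finset.card_pos.2 ⟨i, this⟩
      omega
    exact ⟨fun i => le_of_eq (hz i).symm, fun i hi => absurd (hz i) hi, rfl,
      linearIndependent_empty_type⟩
  | succ N ih =>
    intro a hcard ha
    set S := (Finset.univ.filter (fun i => a i ≠ 0) : Finset (Fin k)) with hS
    by_cases hli : LinearIndependent ℝ (fun i : S => v i)
    · exact ⟨S, a, ha, fun i hi => Finset.mem_filter.2 ⟨Finset.mem_univ _, hi⟩, rfl, hli⟩
    · obtain ⟨g, hgsum, i₀, hgi₀⟩ := Fintype.not_linearIndependent_iff.1 hli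
      set c : Fin k → ℝ := fun i => if h : i ∈ S then g ⟨i, h⟩ else 0 with hc
      have hsupp : ∀ i, c i ≠ 0 → i ∈ S := by
        intro i h
        by_contra hmem
        rw [hc] at h; simp only [dif_neg hmem] at h; exact h rfl
      have hcsum : ∑ i, c i • v i = 0 := by
        rw [← Finset.sum_filter_of_ne (p := fun i => i ∈ S)
          (fun i _ h => hsupp i (fun h0 => h (by rw [h0, zero_smul])))]
        rw [Finset.filter_mem_eq_inter, Finset.univ_inter]
        rw [← Finset.sum_coe_sort S (fun i => c i • v i)]
        rw [← hgsum]
        refine Finset.sum_congr rfl (fun i _ => ?_)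
        congr 1
        rw [hc]; simp only [dif_pos i.2, Subtype.coe_eta]
      have hcne : c ↑i₀ ≠ 0 := by
        rw [hc]; simp only [dif_pos i₀.2, Subtype.coe_eta]
        simpa using hgi₀
      obtain ⟨d, hdsum, hdsupp, j₀, hdj₀⟩ :
          ∃ d : Fin k → ℝ, (∑ i, d i • v i = 0) ∧ (∀ i, d i ≠ 0 → i ∈ S) ∧ ∃ j, 0 < d j := by
        rcases hcne.lt_or_gt with h | h
        · refine ⟨-c, ?_, fun i hi => hsupp i (by simpa using hi), ↑i₀, by simpa using h⟩
          simp only [Pi.neg_apply, neg_smul, Finset.sum_neg_distrib, hcsum, neg_zero]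
        · exact ⟨c, hcsum, hsupp, ↑i₀, h⟩
      set T := (Finset.univ.filter (fun i => 0 < d i) : Finset (Fin k)) with hT
      have hTne : T.Nonempty := ⟨j₀, Finset.mem_filter.2 ⟨Finset.mem_univ _, hdj₀⟩⟩
      set t := T.inf' hTne (fun i => a i / d i) with htdef
      obtain ⟨j₁, hj₁T, hj₁⟩ := T.exists_mem_eq_inf' hTne (fun i => a i / d i)
      have hdj₁ : 0 < d j₁ := (Finset.mem_filter.1 hj₁T).2
      have ht0 : 0 ≤ t := by
        rw [← htdef] at hj₁
        rw [hj₁]; exact div_nonneg (ha j₁) hdj₁.le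
      set b : Fin k → ℝ := fun i => a i - t * d i with hb
      have hb0 : ∀ i, 0 ≤ b i := by
        intro i
        rcases le_or_gt (d i) 0 with h | h
        · have : t * d i ≤ 0 := mul_nonpos_iff.2 (Or.inl ⟨ht0, h⟩)
          simp only [hb]; linarith [ha i]
        · have hiT : i ∈ T := Finset.mem_filter.2 ⟨Finset.mem_univ i, h⟩
          have := Finset.inf'_le (fun i => a i / d i) hiT
          have : t * d i ≤ a i := by
            rw [← le_div_iff₀ h]; exact this
          simp only [hb]; linarith
      have hbsum : ∑ i, b i • v i = ∑ i, a i • v i := by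
        simp only [hb, sub_smul, Finset.sum_sub_distrib, mul_smul]
        rw [← Finset.smul_sum, hdsum, smul_zero, sub_zero]
      have hbj₁ : b j₁ = 0 := by
        simp only [hb]
        rw [← htdef] at hj₁
        rw [hj₁]; field_simp; ring
      have hbsupp : ∀ i, b i ≠ 0 → i ∈ S.erase j₁ := by
        intro i hi
        refine Finset.mem_erase.2 ⟨fun h => hi (h ▸ hbj₁), ?_⟩
        by_cases hd : d i = 0
        · refine Finset.mem_filter.2 ⟨Finset.mem_univ _, fun h0 => hi ?_⟩
          simp only [hb, h0, hd, mul_zero, sub_zero]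
        · exact hdsupp i hd
      have hj₁S : j₁ ∈ S := hdsupp j₁ hdj₁.ne'
      have hcard' : (Finset.univ.filter (fun i => b i ≠ 0)).card ≤ N := by
        have h1 : (Finset.univ.filter (fun i => b i ≠ 0)) ⊆ S.erase j₁ := by
          intro i hi; exact hbsupp i (Finset.mem_filter.1 hi).2
        have h2 := Finset.card_le_card h1
        have h3 : (S.erase j₁).card = S.card - 1 := Finset.card_erase_of_mem hj₁S
        have h4 : 0 < S.card := Finset.card_pos.2 ⟨j₁, hj₁S⟩
        omega
      obtain ⟨s, b', hb'0, hb'supp, hb'sum, hb'li⟩ := ih b hcard' hb0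
      exact ⟨s, b', hb'0, hb'supp, hb'sum.trans hbsum, hb'li⟩

lemma exists_good_rep {n k : ℕ} (v : Fin k → E n) :
    ∃ D : ℝ, 0 ≤ D ∧ ∀ u ∈ coneHull (Set.range v),
      ∃ a : Fin k → ℝ, (∀ i, 0 ≤ a i) ∧ u = ∑ i, a i • v i ∧ ∑ i, a i ≤ D * ‖u‖ := by
  classical
  have hCs : ∀ s : Finset (Fin k), ∃ C : ℝ, 0 ≤ C ∧ ∀ b : Fin k → ℝ,
      LinearIndependent ℝ (fun i : s => v i) → (∀ i, b i ≠ 0 → i ∈ s) →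
      ∑ i, b i ≤ C * ‖∑ i, b i • v i‖ := by
    intro s
    by_cases hli : LinearIndependent ℝ (fun i : s => v i)
    · obtain ⟨C, hC0, hC⟩ := abs_sum_le_of_li (fun i : s => v i) hli
      refine ⟨C, hC0, fun b _ hsupp => ?_⟩
      have hzero : ∀ i ∈ Finset.univ, i ∉ s → b i • v i = 0 := by
        intro i _ hi
        rcases eq_or_ne (b i) 0 with h | h
        · rw [h, zero_smul]
        · exact absurd (hsupp i h) hi
      have hzero' : ∀ i ∈ Finset.univ, i ∉ s → b i = 0 := by
        intro i _ hi
        by_contra h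
        exact hi (hsupp i h)
      have h1 : ∑ i, b i = ∑ i : s, b ↑i := by
        rw [Finset.sum_coe_sort s b]
        exact (Finset.sum_subset s.subset_univ (fun i h1 h2 => hzero' i h1 h2)).symm
      have h2 : ∑ i, b i • v i = ∑ i : s, b ↑i • v ↑i := by
        rw [Finset.sum_coe_sort s (fun i => b i • v i)]
        exact (Finset.sum_subset s.subset_univ (fun i h1 h2 => hzero i h1 h2)).symm
      rw [h1, h2]
      calc ∑ i : s, b ↑i ≤ ∑ i : s, |b ↑i| := Finset.sum_le_sum (fun i _ => le_abs_self _)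
      _ ≤ C * ‖∑ i : s, b ↑i • v ↑i‖ := hC (fun i => b ↑i)
    · exact ⟨0, le_refl 0, fun b hli' _ => absurd hli' hli⟩
  choose C hC0 hC using hCs
  refine ⟨∑ s : Finset (Fin k), C s, Finset.sum_nonneg (fun s _ => hC0 s), ?_⟩
  intro u hu
  obtain ⟨a₀, ha₀, hu'⟩ := (mem_coneHull_range_iff v u).1 hu
  obtain ⟨s, b, hb0, hbsupp, hbsum, hbli⟩ :=
    cone_caratheodory v (Finset.univ.filter (fun i => a₀ i ≠ 0)).card a₀ le_rfl ha₀
  have hub : u = ∑ i, b i • v i := by rw [hu', ← hbsum]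
  refine ⟨b, hb0, hub, ?_⟩
  have h1 : ∑ i, b i ≤ C s * ‖∑ i, b i • v i‖ := hC s b hbli hbsupp
  have h2 : C s ≤ ∑ s' : Finset (Fin k), C s' :=
    Finset.single_le_sum (fun s' _ => hC0 s') (Finset.mem_univ s)
  calc ∑ i, b i ≤ C s * ‖u‖ := by rw [hub]; exact h1
  _ ≤ (∑ s' : Finset (Fin k), C s') * ‖u‖ := mul_le_mul_of_nonneg_right h2 (norm_nonneg u)

lemma dist_le_iff_inner {n : ℕ} (x p q : E n) :
    dist x p ≤ dist x q ↔ (inner ℝ (x - p) (q - p) : ℝ) ≤ (1/2) * ‖q - p‖^2 := by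
  have hexp : ‖x - q‖^2 = ‖x - p‖^2 - 2 * (inner ℝ (x - p) (q - p) : ℝ) + ‖q - p‖^2 := by
    have : x - q = (x - p) - (q - p) := by abel
    rw [this, norm_sub_sq_real]
  rw [dist_eq_norm, dist_eq_norm]
  constructor
  · intro h
    have h2 : ‖x - p‖^2 ≤ ‖x - q‖^2 := by
      exact pow_le_pow_left₀ (norm_nonneg _) h 2
    nlinarith [h2, hexp]
  · intro h
    have h2 : ‖x - p‖^2 ≤ ‖x - q‖^2 := by nlinarith [hexp]
    exact (pow_le_pow_iff_left₀ (norm_nonneg _) (norm_nonneg _) (by norm_num)).1 h2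

theorem stmt14 {n : ℕ} (P : Set (E n)) (hP : IsDiscretePointSet P) (p : E n) (hp : p ∈ P)
    (hbd : p ∈ frontier (convexHull ℝ P))
    (hfg : FinitelyGeneratedCone (dirCone P p)) :
    IsPolyhedron (voronoiCell P p) := by
  classical
  obtain ⟨k, v, hCv⟩ := hfg
  have hvmem : ∀ i, v i ∈ dirCone P p := by
    intro i
    rw [hCv]
    refine (mem_coneHull_range_iff v (v i)).2
      ⟨fun j => if j = i then 1 else 0, fun j => by positivity, ?_⟩
    simp [ite_smul]
  have hvmem' : ∀ i, ∃ (k' : ℕ) (w : Fin k' → E n) (c : Fin k' → ℝ),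
      (∀ j, w j ∈ ((fun q => q - p) '' P)) ∧ (∀ j, 0 ≤ c j) ∧ v i = ∑ j, c j • w j :=
    fun i => hvmem i
  choose m w c hwmem hc hvsum using hvmem'
  have hqex : ∀ i (j : Fin (m i)), ∃ r, r ∈ P ∧ r - p = w i j := by
    intro i j
    obtain ⟨r, hr, hr'⟩ := hwmem i j
    exact ⟨r, hr, hr'⟩
  choose q hqP hqeq using hqex
  set R₀ : ℝ := ∑ i, ∑ j, ‖q i j - p‖ with hR₀def
  have hR₀0 : 0 ≤ R₀ := Finset.sum_nonneg (fun i _ => Finset.sum_nonneg (fun j _ => norm_nonneg _))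
  have hR₀ : ∀ i j, ‖q i j - p‖ ≤ R₀ := by
    intro i j
    have h1 : ‖q i j - p‖ ≤ ∑ j', ‖q i j' - p‖ :=
      Finset.single_le_sum (f := fun j' => ‖q i j' - p‖)
        (fun j' _ => norm_nonneg _) (Finset.mem_univ j)
    have h2 : (∑ j', ‖q i j' - p‖) ≤ R₀ :=
      Finset.single_le_sum (f := fun i' => ∑ j', ‖q i' j' - p‖)
        (fun i' _ => Finset.sum_nonneg (fun j' _ => norm_nonneg _))
        (Finset.mem_univ i)
    exact le_trans h1 h2
  set b : Fin k → ℝ := fun i => ∑ j, c i j * ((1/2) * ‖q i j - p‖^2) with hbdef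
  have hb0 : ∀ i, 0 ≤ b i := fun i => Finset.sum_nonneg (fun j _ => mul_nonneg (hc i j) (by positivity))
  set B : ℝ := ∑ i, b i with hBdef
  have hB0 : 0 ≤ B := Finset.sum_nonneg (fun i _ => hb0 i)
  have hbB : ∀ i, b i ≤ B := fun i => Finset.single_le_sum (fun i' _ => hb0 i') (Finset.mem_univ i)
  obtain ⟨D, hD0, hD⟩ := exists_good_rep v
  set R : ℝ := R₀ + 2 * B * D + 1 with hRdef
  have hR₀R : R₀ ≤ R := by nlinarith
  set F : Set (E n) := P ∩ Metric.closedBall p R with hFdef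
  have hFfin : F.Finite := hP _ Metric.isBounded_closedBall
  set Fs := hFfin.toFinset with hFs
  set e : {x // x ∈ Fs} ≃ Fin Fs.card := Fs.equivFin with hedef
  refine ⟨Fs.card, fun i => (↑(e.symm i) : E n) - p,
    fun i => (1/2) * ‖(↑(e.symm i) : E n) - p‖^2 + (inner ℝ p ((↑(e.symm i) : E n) - p) : ℝ), ?_⟩
  ext x
  simp only [Set.mem_iInter, Set.mem_setOf_eq, voronoiCell]
  constructor
  · intro hx i
    have hmem : (↑(e.symm i) : E n) ∈ F := hFfin.mem_toFinset.1 (e.symm i).2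
    have hd := hx _ hmem.1
    rw [dist_le_iff_inner] at hd
    have hsplit : (inner ℝ x ((↑(e.symm i) : E n) - p) : ℝ)
        = (inner ℝ (x - p) ((↑(e.symm i) : E n) - p) : ℝ)
          + (inner ℝ p ((↑(e.symm i) : E n) - p) : ℝ) := by
      rw [inner_sub_left]; ring
    rw [hsplit]
    linarith
  · intro hx r hr
    rw [dist_le_iff_inner]
    have hW : ∀ r', r' ∈ P → ‖r' - p‖ ≤ R →
        (inner ℝ (x - p) (r' - p) : ℝ) ≤ (1/2) * ‖r' - p‖^2 := by
      intro r' hr'P hr'R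
      have hr'F : r' ∈ Fs := hFfin.mem_toFinset.2
        ⟨hr'P, by rwa [Metric.mem_closedBall, dist_eq_norm]⟩
      have hxi := hx (e ⟨r', hr'F⟩)
      simp only [Equiv.symm_apply_apply] at hxi
      have hsplit : (inner ℝ x (r' - p) : ℝ)
          = (inner ℝ (x - p) (r' - p) : ℝ) + (inner ℝ p (r' - p) : ℝ) := by
        rw [inner_sub_left]; ring
      rw [hsplit] at hxi
      linarith
    rcases le_or_gt ‖r - p‖ R with hrR | hrR
    · exact hW r hr hrR
    · have hvb : ∀ i, (inner ℝ (x - p) (v i) : ℝ) ≤ b i := by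
        intro i
        rw [hvsum i, inner_sum]
        refine Finset.sum_le_sum (fun j _ => ?_)
        rw [real_inner_smul_right]
        have h1 : (inner ℝ (x - p) (w i j) : ℝ) ≤ (1/2) * ‖q i j - p‖^2 := by
          rw [← hqeq i j]
          exact hW _ (hqP i j) (le_trans (hR₀ i j) hR₀R)
        exact mul_le_mul_of_nonneg_left h1 (hc i j)
      have huC : r - p ∈ coneHull (Set.range v) := by
        rw [← hCv]
        exact ⟨1, fun _ => r - p, fun _ => 1, fun _ => ⟨r, hr, rfl⟩,
          fun _ => zero_le_one, by simp⟩
      obtain ⟨a, ha0, hra, haD⟩ := hD (r - p) huC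
      have hu0 : (0:ℝ) < ‖r - p‖ := lt_of_le_of_lt (by nlinarith) hrR
      calc (inner ℝ (x - p) (r - p) : ℝ) = ∑ i, a i * (inner ℝ (x - p) (v i) : ℝ) := by
            rw [hra, inner_sum]
            exact Finset.sum_congr rfl (fun i _ => real_inner_smul_right _ _ _)
      _ ≤ ∑ i, a i * B := Finset.sum_le_sum
            (fun i _ => mul_le_mul_of_nonneg_left (le_trans (hvb i) (hbB i)) (ha0 i))
      _ = (∑ i, a i) * B := by rw [Finset.sum_mul]
      _ ≤ (D * ‖r - p‖) * B := mul_le_mul_of_nonneg_right haD hB0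
      _ ≤ (1/2) * ‖r - p‖^2 := by nlinarith
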